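/- Let S ⊂ ℕ₀^d be a GNS with corner c = (c₁,…,c_d) where c_i ≥ 2 for all i. Then there exists a GNS S' ⊂ ℕ₀^d with corner c such that every gap of S' lies on one of the coordinate axes of ℕ₀^d and g(S') ≤ g(S). -/
import Mathlib


open scoped BigOperators

/-- A generalized numerical semigroup (GNS): a submonoid of ℕ₀^d with finite complement. -/
def IsGNS {d : ℕ} (S : Set (Fin d → ℕ)) : Prop :=
  0 ∈ S ∧ (∀ x ∈ S, ∀ y ∈ S, x + y ∈ S) ∧ Sᶜ.Finite

/-- `c` is a corner of `S`: (1) any tuple whose i-th coordinate is ≥ c i lies in S;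
(2) for each i with c i ≥ 1 there is a tuple with i-th coordinate c i − 1 outside S. -/
def IsCornerOf {d : ℕ} (S : Set (Fin d → ℕ)) (c : Fin d → ℕ) : Prop :=
  c ∈ S ∧
  (∀ i : Fin d, ∀ x : Fin d → ℕ, c i ≤ x i → x ∈ S) ∧
  (∀ i : Fin d, c i = 0 ∨ ∃ x : Fin d → ℕ, x i + 1 = c i ∧ x ∉ S)

lemma gns_aux_decomp {d : ℕ} (x : Fin d → ℕ) (i : Fin d) :
    x = Function.update x i 0 + Pi.single i (x i) := by
  funext j
  by_cases hj : j = i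
  · subst hj; simp
  · simp [Function.update_of_ne hj, Pi.single_eq_of_ne hj]

lemma gns_sum_single {d : ℕ} (i : Fin d) (k : ℕ) : ∑ j, Pi.single i k j = k := by
  simp [Pi.single_apply]

lemma gns_two_coords_le_sum {d : ℕ} (x : Fin d → ℕ) {i j : Fin d} (hij : i ≠ j) :
    x i + x j ≤ ∑ t, x t := by
  have h1 : ∑ t ∈ ({i, j} : Finset (Fin d)), x t ≤ ∑ t, x t :=
    Finset.sum_le_sum_of_subset (Finset.subset_univ _)
  rwa [Finset.sum_pair hij] at h1

theorem exists_GNS_gaps_on_axes {d : ℕ} (S : Set (Fin d → ℕ)) (hS : IsGNS S)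
    (c : Fin d → ℕ) (hc : IsCornerOf S c) (hc2 : ∀ i, 2 ≤ c i) :
    ∃ S' : Set (Fin d → ℕ), IsGNS S' ∧ IsCornerOf S' c ∧
      (∀ h ∈ S'ᶜ, ∃ i : Fin d, ∀ j : Fin d, j ≠ i → h j = 0) ∧
      Set.ncard S'ᶜ ≤ Set.ncard Sᶜ := by
  classical
  obtain ⟨hS0, hSadd, hSfin⟩ := hS
  obtain ⟨hcS, hc1, hc2'⟩ := hc
  -- gaps of S are bounded by the corner
  have hgapbd : ∀ w, w ∉ S → ∀ i, w i < c i := by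
    intro w hw i
    by_contra hle
    exact hw (hc1 i w (le_of_not_gt hle))
  -- the set of "axis gap points"
  set Bad : Set (Fin d → ℕ) :=
    {x | ∃ i k, (1 ≤ k ∧ ∃ w, w ∉ S ∧ w i = k) ∧ x = Pi.single i k} with hBadDef
  -- existence of minimal-sum gaps
  have exists_min : ∀ (i : Fin d) (k : ℕ), (∃ w, w ∉ S ∧ w i = k) →
      ∃ x, (x ∉ S ∧ x i = k) ∧ ∀ y, y ∉ S → y i = k → ∑ j, x j ≤ ∑ j, y j := by
    intro i k hex
    obtain ⟨w, hwS, hwi⟩ := hex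
    have hTne : ((fun x : Fin d → ℕ => ∑ j, x j) '' {x | x ∉ S ∧ x i = k}).Nonempty :=
      ⟨∑ j, w j, ⟨w, ⟨hwS, hwi⟩, rfl⟩⟩
    obtain ⟨x, hx, hxs⟩ := Nat.sInf_mem hTne
    refine ⟨x, hx, ?_⟩
    intro y hy hyi
    exact le_trans (le_of_eq hxs) (Nat.sInf_le ⟨y, ⟨hy, hyi⟩, rfl⟩)
  -- the choice of a minimal-sum gap
  let g : Fin d → ℕ → (Fin d → ℕ) := fun i k =>
    if h : ∃ w, w ∉ S ∧ w i = k then (exists_min i k h).choose else 0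
  have gspec : ∀ (i : Fin d) (k : ℕ), (∃ w, w ∉ S ∧ w i = k) →
      (g i k ∉ S ∧ (g i k) i = k) ∧ ∀ y, y ∉ S → y i = k → ∑ j, (g i k) j ≤ ∑ j, y j := by
    intro i k h
    simp only [g, dif_pos h]
    exact (exists_min i k h).choose_spec
  -- the injection from Bad into the gaps of S
  let f : (Fin d → ℕ) → (Fin d → ℕ) := fun x =>
    if hx : ∃ i, 1 ≤ x i ∧ x = Pi.single i (x i) ∧ ∃ w, w ∉ S ∧ w i = x i
    then g hx.choose (x hx.choose) else x
  have fspec : ∀ x ∈ Bad, ∃ i, 1 ≤ x i ∧ x = Pi.single i (x i) ∧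
      (∃ w, w ∉ S ∧ w i = x i) ∧ f x = g i (x i) := by
    intro x hx
    obtain ⟨i, k, ⟨hk1, hw⟩, hxeq⟩ := hx
    have hxi : x i = k := by rw [hxeq]; simp
    have hcond : ∃ i, 1 ≤ x i ∧ x = Pi.single i (x i) ∧ ∃ w, w ∉ S ∧ w i = x i :=
      ⟨i, by rw [hxi]; exact hk1, by rw [hxi]; exact hxeq, by rw [hxi]; exact hw⟩
    refine ⟨hcond.choose, hcond.choose_spec.1, hcond.choose_spec.2.1, hcond.choose_spec.2.2, ?_⟩
    simp only [f, dif_pos hcond]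
  have hmapsto : ∀ x ∈ Bad, f x ∈ Sᶜ := by
    intro x hx
    obtain ⟨i, _, _, hw, hfx⟩ := fspec x hx
    rw [hfx]
    exact ((gspec i (x i) hw).1).1
  have hinj : Set.InjOn f Bad := by
    intro x₁ hx₁ x₂ hx₂ hf
    obtain ⟨i₁, hk₁, hx₁eq, hw₁, hf₁⟩ := fspec x₁ hx₁
    obtain ⟨i₂, hk₂, hx₂eq, hw₂, hf₂⟩ := fspec x₂ hx₂
    set z := f x₁ with hz
    have hz₁ : z = g i₁ (x₁ i₁) := hf₁
    have hz₂ : z = g i₂ (x₂ i₂) := hf.trans hf₂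
    obtain ⟨⟨hzS, hzi₁⟩, hzmin₁⟩ := gspec i₁ (x₁ i₁) hw₁
    obtain ⟨⟨_, hzi₂⟩, hzmin₂⟩ := gspec i₂ (x₂ i₂) hw₂
    rw [← hz₁] at hzS hzi₁ hzmin₁
    rw [← hz₂] at hzi₂ hzmin₂
    by_cases hii : i₁ = i₂
    · subst hii
      have : x₁ i₁ = x₂ i₁ := by rw [← hzi₁, ← hzi₂]
      rw [hx₁eq, hx₂eq, this]
    · exfalso
      by_cases hs : Pi.single i₁ (x₁ i₁) ∈ S
      · -- remove the i₁-coordinate from z : a smaller gap with i₂-coordinate x₂ i₂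
        have hrS : Function.update z i₁ 0 ∉ S := by
          intro hrS
          exact hzS (by
            rw [gns_aux_decomp z i₁, hzi₁]
            exact hSadd _ hrS _ hs)
        have hri₂ : (Function.update z i₁ 0) i₂ = x₂ i₂ := by
          rw [Function.update_of_ne (Ne.symm hii)]; exact hzi₂
        have hle := hzmin₂ _ hrS hri₂
        have hsum : ∑ j, z j = (∑ j, (Function.update z i₁ 0) j) + x₁ i₁ := by
          conv_lhs => rw [gns_aux_decomp z i₁, hzi₁]
          simp only [Pi.add_apply]
          rw [Finset.sum_add_distrib, gns_sum_single]
        omega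
      · -- Pi.single i₁ (x₁ i₁) itself is a gap with a smaller sum
        have hle := hzmin₁ _ hs (by simp)
        rw [gns_sum_single] at hle
        have := gns_two_coords_le_sum z hii
        rw [hzi₁, hzi₂] at this
        omega
  have hBadFin : Bad.Finite := by
    refine Set.Finite.of_finite_image (hSfin.subset ?_) hinj
    rintro _ ⟨x, hx, rfl⟩
    exact hmapsto x hx
  refine ⟨Badᶜ, ⟨?_, ?_, by rwa [compl_compl]⟩, ⟨?_, ?_, ?_⟩, ?_, ?_⟩
  · -- 0 ∈ Badᶜ
    rintro ⟨i, k, ⟨hk1, _⟩, h0⟩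
    have : (0 : Fin d → ℕ) i = k := by rw [h0]; simp
    simp at this
    omega
  · -- closure
    rintro x hx y hy ⟨i, m, ⟨hm1, w, hwS, hwi⟩, hsum⟩
    have hxj : ∀ j, j ≠ i → x j = 0 ∧ y j = 0 := by
      intro j hj
      have h := congrFun hsum j
      simp only [Pi.add_apply, Pi.single_eq_of_ne hj] at h
      omega
    have hab : x i + y i = m := by
      have h := congrFun hsum i
      simpa using h
    have hx1 : x = Pi.single i (x i) := by
      funext j
      by_cases hj : j = i
      · subst hj; simp
      · rw [Pi.single_eq_of_ne hj]; exact (hxj j hj).1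
    have hy1 : y = Pi.single i (y i) := by
      funext j
      by_cases hj : j = i
      · subst hj; simp
      · rw [Pi.single_eq_of_ne hj]; exact (hxj j hj).2
    by_cases ha0 : x i = 0
    · have hx0 : x = 0 := by rw [hx1, ha0]; simp
      exact hy ⟨i, m, ⟨hm1, w, hwS, hwi⟩, by rw [← hsum, hx0, zero_add]⟩
    by_cases hb0 : y i = 0
    · have hy0 : y = 0 := by rw [hy1, hb0]; simp
      exact hx ⟨i, m, ⟨hm1, w, hwS, hwi⟩, by rw [← hsum, hy0, add_zero]⟩
    have hxA : ¬∃ v, v ∉ S ∧ v i = x i := by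
      intro hv
      exact hx ⟨i, x i, ⟨Nat.one_le_iff_ne_zero.2 ha0, hv⟩, hx1⟩
    have hyA : ¬∃ v, v ∉ S ∧ v i = y i := by
      intro hv
      exact hy ⟨i, y i, ⟨Nat.one_le_iff_ne_zero.2 hb0, hv⟩, hy1⟩
    have hw' : Function.update w i (x i) ∈ S := by
      by_contra hcon
      exact hxA ⟨_, hcon, Function.update_self i (x i) w⟩
    have hsing : Pi.single i (y i) ∈ S := by
      by_contra hcon
      exact hyA ⟨_, hcon, by simp⟩
    refine hwS ?_
    have hdec : w = Function.update w i (x i) + Pi.single i (y i) := by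
      funext j
      by_cases hj : j = i
      · subst hj; simp [hwi, ← hab]
      · simp [Function.update_of_ne hj, Pi.single_eq_of_ne hj]
    rw [hdec]
    exact hSadd _ hw' _ hsing
  · -- c ∈ Badᶜ
    rintro ⟨i, k, ⟨hk1, w, hwS, hwi⟩, hceq⟩
    have h1 : c i = k := by rw [hceq]; simp
    have h2 := hgapbd w hwS i
    omega
  · -- corner condition (1)
    intro i x hcix
    intro hxBad
    obtain ⟨j, k, ⟨hk1, w, hwS, hwj⟩, hxeq⟩ := hxBad
    have hk : k < c j := by rw [← hwj]; exact hgapbd w hwS j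
    by_cases hji : j = i
    · subst hji
      have : x j = k := by rw [hxeq]; simp
      omega
    · have : x i = 0 := by rw [hxeq]; exact Pi.single_eq_of_ne (Ne.symm hji) _
      have := hc2 i
      omega
  · -- corner condition (2)
    intro i
    rcases hc2' i with h0 | ⟨w, hwci, hwS⟩
    · exact Or.inl h0
    · right
      have hwi1 : 1 ≤ w i := by have := hc2 i; omega
      refine ⟨Pi.single i (w i), by simp [hwci], ?_⟩
      intro hmem
      exact hmem ⟨i, w i, ⟨hwi1, w, hwS, rfl⟩, rfl⟩
  · -- gaps on axes
    intro h hh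
    rw [compl_compl] at hh
    obtain ⟨i, k, _, hheq⟩ := hh
    exact ⟨i, fun j hj => by rw [hheq]; exact Pi.single_eq_of_ne hj _⟩
  · -- genus inequality
    rw [compl_compl]
    exact Set.ncard_le_ncard_of_injOn f hmapsto hinj hSfin
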